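/- arXiv:2603.06023 — 2 statements merged into one kernel-verified Lean document; each statement's English description precedes it below -/
import Mathlib

section
/- Let G: ℝ^D → ℝ^{D'×D'} be a continuous function with ‖G(z)‖_F ≤ A·exp(B‖z‖₂^r) for some 0 ≤ r < 2, let Q_n → Q be PSD D×D matrices, and let Z, Z₁, Z₂,… be i.i.d. standard Gaussian vectors in ℝ^D. Then (1/n)∑_{c=1}^n G(√(Q_n) Z_c) converges in probability to E[G(√Q Z)]. -/
open MeasureTheory ProbabilityTheory Filter
open Topology
open scoped ENNReal NNReal

/-- The standard Gaussian measure on `ℝ^D`. -/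
noncomputable def stdGaussian (D : ℕ) : Measure (Fin D → ℝ) :=
  Measure.pi fun _ => gaussianReal 0 1

/-- The Euclidean norm on `ℝ^D`. -/
noncomputable def euclNorm {D : ℕ} (z : Fin D → ℝ) : ℝ :=
  Real.sqrt (∑ i, (z i) ^ 2)

/-- Frobenius norm of a real square matrix: `√(tr(Qᵀ Q))`. -/
noncomputable def frobNorm {D : ℕ} (Q : Matrix (Fin D) (Fin D) ℝ) : ℝ :=
  Real.sqrt (Matrix.trace (Q.transpose * Q))

/-- The positive semidefinite square root of a positive semidefinite matrix
(removed from Mathlib; restated with its former definition). -/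
noncomputable def Matrix.PosSemidef.sqrt {n 𝕜 : Type*} [Fintype n] [DecidableEq n] [RCLike 𝕜] [PartialOrder 𝕜]
    {A : Matrix n n 𝕜} (hA : A.PosSemidef) : Matrix n n 𝕜 :=
  hA.1.eigenvectorUnitary.1 * Matrix.diagonal ((↑) ∘ (Real.sqrt ∘ hA.1.eigenvalues)) *
  (star hA.1.eigenvectorUnitary : Matrix n n 𝕜)

section SqrtAux
open scoped MatrixOrder

lemma Matrix.PosSemidef.sqrt_eq_cfc' {D : ℕ} {A : Matrix (Fin D) (Fin D) ℝ} (hA : A.PosSemidef) :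
    hA.sqrt = CFC.sqrt A := by
  rw [CFC.sqrt_eq_cfc, cfc_nnreal_eq_real _ A hA.nonneg, hA.1.cfc_eq]
  simp only [Matrix.IsHermitian.cfc, Matrix.PosSemidef.sqrt, Real.coe_sqrt, Real.coe_toNNReal']
  rw [Unitary.conjStarAlgAut_apply]
  congr 3
  funext i
  simp [max_eq_left (hA.eigenvalues_nonneg i)]

lemma Matrix.PosSemidef.posSemidef_sqrt {D : ℕ} {A : Matrix (Fin D) (Fin D) ℝ}
    (hA : A.PosSemidef) : hA.sqrt.PosSemidef := by
  rw [hA.sqrt_eq_cfc']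
  exact Matrix.nonneg_iff_posSemidef.mp (CFC.sqrt_nonneg A)

lemma Matrix.PosSemidef.sqrt_mul_self {D : ℕ} {A : Matrix (Fin D) (Fin D) ℝ}
    (hA : A.PosSemidef) : hA.sqrt * hA.sqrt = A := by
  rw [hA.sqrt_eq_cfc']
  exact CFC.sqrt_mul_sqrt_self A hA.nonneg

lemma Matrix.PosSemidef.eq_sqrt_of_sq_eq {D : ℕ} {A B : Matrix (Fin D) (Fin D) ℝ}
    (hB : B.PosSemidef) (hA : A.PosSemidef) (h : B ^ 2 = A) : B = hA.sqrt := by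
  rw [hA.sqrt_eq_cfc']
  exact (CFC.sqrt_unique (by rw [← sq]; exact h) hB.nonneg).symm

end SqrtAux

namespace LLNAux

noncomputable def toE (a : ℕ) : Matrix (Fin a) (Fin a) ℝ →ₗ[ℝ] EuclideanSpace ℝ (Fin a × Fin a) where
  toFun X := WithLp.toLp 2 (fun p : Fin a × Fin a => X p.1 p.2)
  map_add' X Y := rfl
  map_smul' c X := rfl

lemma toE_apply {a : ℕ} (X : Matrix (Fin a) (Fin a) ℝ) (p : Fin a × Fin a) :
    toE a X p = X p.1 p.2 := rfl

lemma trace_eq {D : ℕ} (X : Matrix (Fin D) (Fin D) ℝ) :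
    (X.transpose * X).trace = ∑ i, ∑ j, X i j ^ 2 := by
  simp only [Matrix.trace, Matrix.diag, Matrix.mul_apply, Matrix.transpose_apply]
  rw [Finset.sum_comm]
  simp [sq]

lemma trace_nonneg {D : ℕ} (X : Matrix (Fin D) (Fin D) ℝ) : 0 ≤ (X.transpose * X).trace := by
  rw [trace_eq]; positivity

lemma frobNorm_entries {D : ℕ} (X : Matrix (Fin D) (Fin D) ℝ) :
    frobNorm X = Real.sqrt (∑ i, ∑ j, X i j ^ 2) := by
  rw [frobNorm, trace_eq]

lemma frobNorm_eq {D : ℕ} (X : Matrix (Fin D) (Fin D) ℝ) : frobNorm X = ‖toE D X‖ := by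
  rw [frobNorm_entries, EuclideanSpace.norm_eq]
  congr 1
  rw [Fintype.sum_prod_type]
  simp [toE_apply, Real.norm_eq_abs, sq_abs]

lemma frobNorm_nonneg {D : ℕ} (X : Matrix (Fin D) (Fin D) ℝ) : 0 ≤ frobNorm X :=
  Real.sqrt_nonneg _

lemma euclNorm_nonneg {D : ℕ} (z : Fin D → ℝ) : 0 ≤ euclNorm z := Real.sqrt_nonneg _

lemma euclNorm_mulVec_le {D : ℕ} (S : Matrix (Fin D) (Fin D) ℝ) (z : Fin D → ℝ) :
    euclNorm (S.mulVec z) ≤ frobNorm S * euclNorm z := by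
  rw [euclNorm, frobNorm_entries, euclNorm, ← Real.sqrt_mul (by positivity)]
  apply Real.sqrt_le_sqrt
  rw [Finset.sum_mul]
  apply Finset.sum_le_sum
  intro i _
  simpa [Matrix.mulVec, dotProduct] using
    Finset.sum_mul_sq_le_sq_mul_sq Finset.univ (fun j => S i j) z

end LLNAux

namespace LLNAux2
open LLNAux

lemma tendsto_euclidean_iff {ι : Type*} [Fintype ι] {κ : Type*} {l : Filter κ}
    {f : κ → EuclideanSpace ℝ ι} {x : EuclideanSpace ℝ ι} :
    Tendsto f l (𝓝 x) ↔ ∀ p, Tendsto (fun n => f n p) l (𝓝 (x p)) := by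
  rw [(PiLp.continuousLinearEquiv 2 ℝ (fun _ : ι => ℝ)).toHomeomorph.isEmbedding.tendsto_nhds_iff,
    tendsto_pi_nhds]
  exact Iff.rfl

end LLNAux2

namespace LLNAux3
open LLNAux LLNAux2

variable {D : ℕ} {Qn : ℕ → Matrix (Fin D) (Fin D) ℝ} {Q : Matrix (Fin D) (Fin D) ℝ}

lemma entry_tendsto (hconv : Tendsto (fun n => frobNorm (Qn n - Q)) atTop (𝓝 0)) (i j : Fin D) :
    Tendsto (fun n => Qn n i j) atTop (𝓝 (Q i j)) := by
  have h : Tendsto (fun n => toE D (Qn n)) atTop (𝓝 (toE D Q)) := by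
    rw [tendsto_iff_norm_sub_tendsto_zero]
    simpa only [← map_sub, ← frobNorm_eq] using hconv
  exact tendsto_euclidean_iff.mp h (i, j)

lemma sqrt_norm_sq (hS : Q.PosSemidef) : ‖toE D hS.sqrt‖ ^ 2 = Q.trace := by
  have h1 : hS.sqrt.transpose = hS.sqrt := by
    have h := hS.posSemidef_sqrt.isHermitian
    ext i j
    simpa using (h.apply j i).symm
  rw [← frobNorm_eq, frobNorm, Real.sq_sqrt (trace_nonneg _), h1, hS.sqrt_mul_self]

end LLNAux3

namespace LLNAux4
open LLNAux LLNAux2 LLNAux3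

lemma tendsto_sqrt {D : ℕ} {Qn : ℕ → Matrix (Fin D) (Fin D) ℝ} {Q : Matrix (Fin D) (Fin D) ℝ}
    (hQn : ∀ n, (Qn n).PosSemidef) (hQ : Q.PosSemidef)
    (hconv : Tendsto (fun n => frobNorm (Qn n - Q)) atTop (𝓝 0)) :
    Tendsto (fun n => toE D (hQn n).sqrt) atTop (𝓝 (toE D hQ.sqrt)) := by
  set y : ℕ → EuclideanSpace ℝ (Fin D × Fin D) := fun n => toE D (hQn n).sqrt with hy
  -- boundedness
  have htr : Tendsto (fun n => (Qn n).trace) atTop (𝓝 Q.trace) := by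
    simp only [Matrix.trace]
    exact tendsto_finset_sum _ fun i _ => entry_tendsto hconv i i
  have hsq : ∀ n, ‖y n‖ ^ 2 = (Qn n).trace := fun n => sqrt_norm_sq (hQn n)
  obtain ⟨R, hR⟩ : BddAbove (Set.range fun n => ‖y n‖ ^ 2) := by
    rw [show (fun n => ‖y n‖ ^ 2) = fun n => (Qn n).trace from funext hsq]
    exact htr.bddAbove_range
  have hball : ∀ n, y n ∈ Metric.closedBall (0 : EuclideanSpace ℝ (Fin D × Fin D)) (max 1 R) := by
    intro n
    rw [Metric.mem_closedBall, dist_zero_right]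
    rcases le_total (‖y n‖) 1 with h | h
    · exact h.trans (le_max_left _ _)
    · refine le_trans ?_ (le_max_right _ _)
      calc ‖y n‖ = ‖y n‖ * 1 := (mul_one _).symm
        _ ≤ ‖y n‖ * ‖y n‖ := by nlinarith
        _ = ‖y n‖ ^ 2 := (sq (‖y n‖)).symm
        _ ≤ R := hR ⟨n, rfl⟩
  -- subsequence argument
  apply tendsto_of_subseq_tendsto
  intro ns hns
  obtain ⟨b, -, φ, hφ, hb⟩ :=
    tendsto_subseq_of_bounded Metric.isBounded_closedBall (fun k => hball (ns k))
  refine ⟨φ, ?_⟩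
  -- entrywise limits
  have hbe : ∀ i j, Tendsto (fun k => (hQn (ns (φ k))).sqrt i j) atTop (𝓝 (b (i, j))) :=
    fun i j => tendsto_euclidean_iff.mp hb (i, j)
  have hQe : ∀ i j, Tendsto (fun k => Qn (ns (φ k)) i j) atTop (𝓝 (Q i j)) :=
    fun i j => (entry_tendsto hconv i j).comp (hns.comp hφ.tendsto_atTop)
  set T : Matrix (Fin D) (Fin D) ℝ := Matrix.of fun i j => b (i, j) with hT
  have hTb : toE D T = b := by ext p; simp [toE_apply, hT]
  have hTe : ∀ i j, Tendsto (fun k => (hQn (ns (φ k))).sqrt i j) atTop (𝓝 (T i j)) := hbe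
  -- T is PSD
  have hTherm : T.IsHermitian := by
    ext i j
    have h1 : Tendsto (fun k => (hQn (ns (φ k))).sqrt j i) atTop (𝓝 (T j i)) := hTe j i
    have h2 : Tendsto (fun k => (hQn (ns (φ k))).sqrt j i) atTop (𝓝 (T i j)) := by
      refine (hTe i j).congr fun k => ?_
      simpa using ((hQn (ns (φ k))).posSemidef_sqrt.isHermitian.apply i j).symm
    simpa using tendsto_nhds_unique h1 h2
  have hTpsd : T.PosSemidef := by
    refine Matrix.posSemidef_iff_dotProduct_mulVec.mpr ⟨hTherm, fun v => ?_⟩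
    have hlim : Tendsto (fun k => dotProduct (star v) ((hQn (ns (φ k))).sqrt.mulVec v))
        atTop (𝓝 (dotProduct (star v) (T.mulVec v))) := by
      simp only [dotProduct, Matrix.mulVec]
      refine tendsto_finset_sum _ fun i _ => ?_
      exact (tendsto_const_nhds.mul (tendsto_finset_sum _ fun j _ =>
        (hTe i j).mul tendsto_const_nhds))
    exact ge_of_tendsto' hlim fun k => (hQn (ns (φ k))).posSemidef_sqrt.dotProduct_mulVec_nonneg v
  -- T ^ 2 = Q
  have hT2 : T ^ 2 = Q := by
    rw [pow_two]
    ext i j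
    have h1 : Tendsto (fun k => ((hQn (ns (φ k))).sqrt * (hQn (ns (φ k))).sqrt) i j) atTop
        (𝓝 ((T * T) i j)) := by
      simp only [Matrix.mul_apply]
      exact tendsto_finset_sum _ fun l _ => (hTe i l).mul (hTe l j)
    have h2 : Tendsto (fun k => ((hQn (ns (φ k))).sqrt * (hQn (ns (φ k))).sqrt) i j) atTop
        (𝓝 (Q i j)) := by
      refine (hQe i j).congr fun k => ?_
      rw [(hQn (ns (φ k))).sqrt_mul_self]
    exact tendsto_nhds_unique h1 h2
  have : T = hQ.sqrt := hTpsd.eq_sqrt_of_sq_eq hQ hT2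
  rw [show toE D hQ.sqrt = b from by rw [← this, hTb]]
  exact hb

end LLNAux4

namespace LLNAux5
open LLNAux LLNAux2

lemma exists_bound (b r : ℝ) (hb : 0 ≤ b) (hr0 : 0 ≤ r) (hr2 : r < 2) :
    ∃ C : ℝ, 0 ≤ C ∧ ∀ t : ℝ, 0 ≤ t → b * t ^ r ≤ C + t ^ (2 : ℝ) / 4 := by
  have h2r : (0:ℝ) < 2 - r := by linarith
  set T : ℝ := max 1 ((4 * b) ^ (1 / (2 - r))) with hTdef
  have hT1 : (1:ℝ) ≤ T := le_max_left _ _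
  have hT0 : (0:ℝ) ≤ T := by linarith
  have hTr : 0 ≤ T ^ r := Real.rpow_nonneg hT0 r
  refine ⟨b * T ^ r, mul_nonneg hb hTr, fun t ht => ?_⟩
  have ht2 : 0 ≤ t ^ (2:ℝ) := Real.rpow_nonneg ht _
  rcases le_total t T with h | h
  · have h1 : t ^ r ≤ T ^ r := Real.rpow_le_rpow ht h hr0
    have := mul_le_mul_of_nonneg_left h1 hb
    linarith
  · have ht1 : (1:ℝ) ≤ t := hT1.trans h
    have htpos : (0:ℝ) < t := by linarith
    have h4b : 4 * b ≤ t ^ (2 - r) := by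
      have hbase : (0:ℝ) ≤ (4 * b) ^ (1 / (2 - r)) := Real.rpow_nonneg (by linarith) _
      calc 4 * b = ((4 * b) ^ (1 / (2 - r))) ^ (2 - r) := by
            rw [← Real.rpow_mul (by linarith), one_div, inv_mul_cancel₀ h2r.ne',
              Real.rpow_one]
        _ ≤ t ^ (2 - r) :=
            Real.rpow_le_rpow hbase ((le_max_right _ _).trans h) h2r.le
    have htr : 0 ≤ t ^ r := Real.rpow_nonneg ht _
    have key : b * t ^ r ≤ t ^ (2 - r) / 4 * t ^ r := by
      apply mul_le_mul_of_nonneg_right _ htr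
      linarith
    have : t ^ (2 - r) * t ^ r = t ^ (2:ℝ) := by
      rw [← Real.rpow_add htpos]; norm_num
    nlinarith [mul_nonneg hb hTr]

lemma integrable_exp_quarter :
    Integrable (fun x : ℝ => Real.exp (x ^ 2 / 4)) (gaussianReal 0 1) := by
  rw [gaussianReal_of_var_ne_zero 0 one_ne_zero,
    integrable_withDensity_iff (measurable_gaussianPDF 0 1)
      (ae_of_all _ fun x => ENNReal.ofReal_lt_top)]
  have heq : ∀ x : ℝ, Real.exp (x ^ 2 / 4) * (gaussianPDF 0 1 x).toReal
      = (Real.sqrt (2 * Real.pi))⁻¹ * Real.exp (-(4⁻¹) * x ^ 2) := by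
    intro x
    rw [gaussianPDF, ENNReal.toReal_ofReal (gaussianPDFReal_nonneg 0 1 x), gaussianPDFReal]
    push_cast
    rw [mul_one, mul_comm (Real.exp _), mul_assoc, ← Real.exp_add]
    ring_nf
  simp only [heq]
  exact (integrable_exp_neg_mul_sq (by norm_num : (0:ℝ) < 4⁻¹)).const_mul _

lemma continuous_euclNorm {D : ℕ} : Continuous fun z : Fin D → ℝ => euclNorm z := by
  unfold euclNorm
  exact Real.continuous_sqrt.comp (continuous_finset_sum _ fun i _ => (continuous_apply i).pow 2)

lemma continuous_rpow_const {r : ℝ} (hr0 : 0 ≤ r) : Continuous fun t : ℝ => t ^ r :=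
  continuous_iff_continuousAt.2 fun x => Real.continuousAt_rpow_const x r (Or.inr hr0)

lemma integrable_exp_rpow {D : ℕ} (b r : ℝ) (hb : 0 ≤ b) (hr0 : 0 ≤ r) (hr2 : r < 2) :
    Integrable (fun z : Fin D → ℝ => Real.exp (b * euclNorm z ^ r)) (stdGaussian D) := by
  obtain ⟨C, hC0, hC⟩ := exists_bound b r hb hr0 hr2
  have hg : Integrable (fun z : Fin D → ℝ => Real.exp C * ∏ i, Real.exp ((z i) ^ 2 / 4))
      (stdGaussian D) := by
    letI : MeasureSpace ℝ := ⟨gaussianReal 0 1⟩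
    haveI : IsProbabilityMeasure (volume : Measure ℝ) :=
      (inferInstance : IsProbabilityMeasure (gaussianReal 0 1))
    have hvol : stdGaussian D = (volume : Measure (Fin D → ℝ)) := rfl
    rw [hvol]
    exact (Integrable.fintype_prod (f := fun (_ : Fin D) (x : ℝ) => Real.exp (x ^ 2 / 4))
      (fun i => integrable_exp_quarter)).const_mul _
  refine hg.mono ?_ (ae_of_all _ fun z => ?_)
  · refine Continuous.aestronglyMeasurable ?_
    exact Real.continuous_exp.comp
      ((continuous_const.mul ((continuous_rpow_const hr0).comp continuous_euclNorm)))
  · have hprod : (0:ℝ) ≤ ∏ i, Real.exp ((z i) ^ 2 / 4) :=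
      Finset.prod_nonneg fun i _ => (Real.exp_pos _).le
    rw [Real.norm_of_nonneg (Real.exp_pos _).le,
      Real.norm_of_nonneg (mul_nonneg (Real.exp_pos _).le hprod), ← Real.exp_sum, ← Real.exp_add]
    apply Real.exp_le_exp.2
    have h2 : euclNorm z ^ (2:ℝ) = ∑ i, (z i) ^ 2 := by
      rw [euclNorm, show ((2:ℝ)) = ((2:ℕ):ℝ) by norm_num, Real.rpow_natCast,
        Real.sq_sqrt (by positivity)]
    have := hC (euclNorm z) (euclNorm_nonneg z)
    rw [h2] at this
    rw [← Finset.sum_div]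
    linarith

lemma frobG_bound {D D' : ℕ} (G : (Fin D → ℝ) → Matrix (Fin D') (Fin D') ℝ)
    (A B r : ℝ) (hA : 0 < A) (hB : 0 < B) (hr0 : 0 ≤ r)
    (hG : ∀ z, frobNorm (G z) ≤ A * Real.exp (B * euclNorm z ^ r))
    (S : Matrix (Fin D) (Fin D) ℝ) (K : ℝ) (hK : frobNorm S ≤ K) (z : Fin D → ℝ) :
    frobNorm (G (S.mulVec z)) ≤ A * Real.exp ((B * K ^ r) * euclNorm z ^ r) := by
  have hK0 : 0 ≤ K := (frobNorm_nonneg S).trans hK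
  refine (hG _).trans ?_
  apply mul_le_mul_of_nonneg_left _ hA.le
  apply Real.exp_le_exp.2
  rw [mul_assoc]
  apply mul_le_mul_of_nonneg_left _ hB.le
  calc euclNorm (S.mulVec z) ^ r ≤ (K * euclNorm z) ^ r := by
        apply Real.rpow_le_rpow (euclNorm_nonneg _) _ hr0
        exact (euclNorm_mulVec_le S z).trans
          (mul_le_mul_of_nonneg_right hK (euclNorm_nonneg z))
    _ = K ^ r * euclNorm z ^ r := Real.mul_rpow hK0 (euclNorm_nonneg z)

end LLNAux5

namespace LLNAux6
open LLNAux LLNAux2 LLNAux3 LLNAux4 LLNAux5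

variable {D D' : ℕ}

lemma continuous_toE {a : ℕ} : Continuous (toE a) := by
  have h : ⇑(toE a) = fun X : Matrix (Fin a) (Fin a) ℝ =>
      (PiLp.continuousLinearEquiv 2 ℝ (fun _ : Fin a × Fin a => ℝ)).symm
        (fun p => X p.1 p.2) := rfl
  rw [h]
  exact (PiLp.continuousLinearEquiv 2 ℝ _).symm.continuous.comp
    (continuous_pi fun p => (continuous_apply p.2).comp (continuous_apply p.1))

lemma continuous_gE (G : (Fin D → ℝ) → Matrix (Fin D') (Fin D') ℝ) (hGcont : Continuous G)
    (S : Matrix (Fin D) (Fin D) ℝ) :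
    Continuous fun z : Fin D → ℝ => toE D' (G (S.mulVec z)) :=
  continuous_toE.comp (hGcont.comp (continuous_const.matrix_mulVec continuous_id))

lemma integrable_gE (G : (Fin D → ℝ) → Matrix (Fin D') (Fin D') ℝ) (hGcont : Continuous G)
    (A B r : ℝ) (hA : 0 < A) (hB : 0 < B) (hr0 : 0 ≤ r) (hr2 : r < 2)
    (hG : ∀ z, frobNorm (G z) ≤ A * Real.exp (B * euclNorm z ^ r))
    (S : Matrix (Fin D) (Fin D) ℝ) (K : ℝ) (hK : frobNorm S ≤ K) :
    Integrable (fun z : Fin D → ℝ => toE D' (G (S.mulVec z))) (stdGaussian D) := by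
  have hK0 : 0 ≤ K := (frobNorm_nonneg S).trans hK
  have hb : 0 ≤ B * K ^ r := mul_nonneg hB.le (Real.rpow_nonneg hK0 r)
  refine ((integrable_exp_rpow (B * K ^ r) r hb hr0 hr2).const_mul A).mono
    ((continuous_gE G hGcont S).aestronglyMeasurable) (ae_of_all _ fun z => ?_)
  rw [← frobNorm_eq, Real.norm_of_nonneg (mul_nonneg hA.le (Real.exp_pos _).le)]
  exact frobG_bound G A B r hA hB hr0 hG S K hK z

lemma norm_gE_le (G : (Fin D → ℝ) → Matrix (Fin D') (Fin D') ℝ)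
    (A B r : ℝ) (hA : 0 < A) (hB : 0 < B) (hr0 : 0 ≤ r)
    (hG : ∀ z, frobNorm (G z) ≤ A * Real.exp (B * euclNorm z ^ r))
    (S : Matrix (Fin D) (Fin D) ℝ) (K : ℝ) (hK : frobNorm S ≤ K) (z : Fin D → ℝ) :
    ‖toE D' (G (S.mulVec z))‖ ≤ A * Real.exp ((B * K ^ r) * euclNorm z ^ r) := by
  rw [← frobNorm_eq]
  exact frobG_bound G A B r hA hB hr0 hG S K hK z

end LLNAux6

namespace LLNAux7
open LLNAux LLNAux2 LLNAux3 LLNAux4 LLNAux5 LLNAux6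

variable {D D' : ℕ}

lemma lintegral_tendsto (G : (Fin D → ℝ) → Matrix (Fin D') (Fin D') ℝ) (hGcont : Continuous G)
    (A B r : ℝ) (hA : 0 < A) (hB : 0 < B) (hr0 : 0 ≤ r) (hr2 : r < 2)
    (hG : ∀ z, frobNorm (G z) ≤ A * Real.exp (B * euclNorm z ^ r))
    (Sn : ℕ → Matrix (Fin D) (Fin D) ℝ) (S : Matrix (Fin D) (Fin D) ℝ)
    (hSn : Tendsto (fun n => toE D (Sn n)) atTop (𝓝 (toE D S)))
    (K : ℝ) (hKn : ∀ n, frobNorm (Sn n) ≤ K) (hKS : frobNorm S ≤ K) :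
    Tendsto (fun n => ∫⁻ z, (‖toE D' (G ((Sn n).mulVec z)) - toE D' (G (S.mulVec z))‖₊ : ℝ≥0∞)
      ∂(stdGaussian D)) atTop (𝓝 0) := by
  have hK0 : 0 ≤ K := (frobNorm_nonneg S).trans hKS
  have hb : 0 ≤ B * K ^ r := mul_nonneg hB.le (Real.rpow_nonneg hK0 r)
  have hmeas : ∀ n, Measurable fun z : Fin D → ℝ =>
      (‖toE D' (G ((Sn n).mulVec z)) - toE D' (G (S.mulVec z))‖₊ : ℝ≥0∞) := fun n =>
    ((((continuous_gE G hGcont (Sn n)).sub (continuous_gE G hGcont S)).nnnorm).measurable).coe_nnreal_ennreal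
  have hint : Integrable (fun z : Fin D → ℝ =>
      2 * (A * Real.exp ((B * K ^ r) * euclNorm z ^ r))) (stdGaussian D) :=
    ((integrable_exp_rpow (B * K ^ r) r hb hr0 hr2).const_mul A).const_mul 2
  have hbound : ∀ n, (fun z : Fin D → ℝ =>
      (‖toE D' (G ((Sn n).mulVec z)) - toE D' (G (S.mulVec z))‖₊ : ℝ≥0∞)) ≤ᵐ[stdGaussian D]
      fun z => ENNReal.ofReal (2 * (A * Real.exp ((B * K ^ r) * euclNorm z ^ r))) := by
    intro n
    refine ae_of_all _ fun z => ?_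
    simp only []
    rw [← enorm_eq_nnnorm, ← ofReal_norm]
    apply ENNReal.ofReal_le_ofReal
    calc ‖toE D' (G ((Sn n).mulVec z)) - toE D' (G (S.mulVec z))‖
        ≤ ‖toE D' (G ((Sn n).mulVec z))‖ + ‖toE D' (G (S.mulVec z))‖ := norm_sub_le _ _
      _ ≤ A * Real.exp ((B * K ^ r) * euclNorm z ^ r)
          + A * Real.exp ((B * K ^ r) * euclNorm z ^ r) := by
          gcongr
          · exact norm_gE_le G A B r hA hB hr0 hG (Sn n) K (hKn n) z
          · exact norm_gE_le G A B r hA hB hr0 hG S K hKS z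
      _ = 2 * (A * Real.exp ((B * K ^ r) * euclNorm z ^ r)) := by ring
  have hfin : ∫⁻ z, ENNReal.ofReal (2 * (A * Real.exp ((B * K ^ r) * euclNorm z ^ r)))
      ∂(stdGaussian D) ≠ ⊤ := hint.lintegral_lt_top.ne
  have hlim : ∀ᵐ z ∂(stdGaussian D), Tendsto (fun n =>
      (‖toE D' (G ((Sn n).mulVec z)) - toE D' (G (S.mulVec z))‖₊ : ℝ≥0∞)) atTop
      (𝓝 ((fun _ => (0:ℝ≥0∞)) z)) := by
    refine ae_of_all _ fun z => ?_
    have hentry : ∀ i j, Tendsto (fun n => Sn n i j) atTop (𝓝 (S i j)) :=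
      fun i j => tendsto_euclidean_iff.mp hSn (i, j)
    have hmv : Tendsto (fun n => (Sn n).mulVec z) atTop (𝓝 (S.mulVec z)) := by
      rw [tendsto_pi_nhds]
      intro i
      simp only [Matrix.mulVec, dotProduct]
      exact tendsto_finset_sum _ fun j _ => (hentry i j).mul tendsto_const_nhds
    have hGlim : Tendsto (fun n => toE D' (G ((Sn n).mulVec z))) atTop
        (𝓝 (toE D' (G (S.mulVec z)))) :=
      (continuous_toE.tendsto _).comp ((hGcont.tendsto _).comp hmv)
    have : Tendsto (fun n => toE D' (G ((Sn n).mulVec z)) - toE D' (G (S.mulVec z))) atTop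
        (𝓝 0) := by
      have h' := hGlim.sub (tendsto_const_nhds (x := toE D' (G (S.mulVec z))) (f := atTop))
      simpa using h'
    have := (ENNReal.tendsto_coe.2 this.nnnorm)
    simpa using this
  have := tendsto_lintegral_of_dominated_convergence _ hmeas hbound hfin hlim
  simpa using this

end LLNAux7


open LLNAux LLNAux2 LLNAux3 LLNAux4 LLNAux5 LLNAux6 LLNAux7 in
/-- Law of large numbers along a convergent sequence of PSD matrices:
`(1/n) ∑_{c<n} G(√(Q_n) Z_c) → E[G(√Q Z)]` in probability. -/
theorem lln_along_convergent_psd {D D' : ℕ}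
    (G : (Fin D → ℝ) → Matrix (Fin D') (Fin D') ℝ) (hGcont : Continuous G)
    (A B r : ℝ) (hA : 0 < A) (hB : 0 < B) (hr0 : 0 ≤ r) (hr2 : r < 2)
    (hG : ∀ z, frobNorm (G z) ≤ A * Real.exp (B * euclNorm z ^ r))
    (Qn : ℕ → Matrix (Fin D) (Fin D) ℝ) (Q : Matrix (Fin D) (Fin D) ℝ)
    (hQn : ∀ n, (Qn n).PosSemidef) (hQ : Q.PosSemidef)
    (hconv : Tendsto (fun n => frobNorm (Qn n - Q)) atTop (nhds 0))
    {Ω : Type*} [MeasurableSpace Ω] (μ : Measure Ω) [IsProbabilityMeasure μ]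
    (Z : ℕ → Ω → (Fin D → ℝ)) (hZmeas : ∀ c, Measurable (Z c))
    (hZindep : iIndepFun Z μ)
    (hZlaw : ∀ c, Measure.map (Z c) μ = stdGaussian D) :
    ∀ δ > 0,
      Tendsto
        (fun (n : ℕ) =>
          μ {ω |
            δ <
              frobNorm
                ((n : ℝ)⁻¹ •
                    ∑ c ∈ Finset.range n, G ((hQn n).sqrt.mulVec (Z c ω)) -
                  Matrix.of fun i j =>
                    ∫ z, G (hQ.sqrt.mulVec z) i j ∂(stdGaussian D))})
        atTop (nhds 0) := by
  intro δ hδ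
  set ν : Measure (Fin D → ℝ) := stdGaussian D with hν
  haveI : IsProbabilityMeasure ν := by
    rw [hν, _root_.stdGaussian]; infer_instance
  -- uniform bound on the square roots
  have hSn : Tendsto (fun n => toE D (hQn n).sqrt) atTop (𝓝 (toE D hQ.sqrt)) :=
    tendsto_sqrt hQn hQ hconv
  obtain ⟨R, hR⟩ : BddAbove (Set.range fun n => ‖toE D (hQn n).sqrt‖) :=
    (hSn.norm).bddAbove_range
  set K : ℝ := max R (frobNorm hQ.sqrt) with hKdef
  have hKn : ∀ n, frobNorm (hQn n).sqrt ≤ K := fun n => by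
    rw [frobNorm_eq]; exact (hR ⟨n, rfl⟩).trans (le_max_left _ _)
  have hKS : frobNorm hQ.sqrt ≤ K := le_max_right _ _
  -- the E-valued functions
  set gE : ℕ → (Fin D → ℝ) → EuclideanSpace ℝ (Fin D' × Fin D') :=
    fun n z => toE D' (G ((hQn n).sqrt.mulVec z)) with hgE
  set g0 : (Fin D → ℝ) → EuclideanSpace ℝ (Fin D' × Fin D') :=
    fun z => toE D' (G (hQ.sqrt.mulVec z)) with hg0
  have hg0cont : Continuous g0 := continuous_gE G hGcont hQ.sqrt
  have hgEcont : ∀ n, Continuous (gE n) := fun n => continuous_gE G hGcont (hQn n).sqrt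
  have hint0 : Integrable g0 ν :=
    integrable_gE G hGcont A B r hA hB hr0 hr2 hG hQ.sqrt K hKS
  set M' : EuclideanSpace ℝ (Fin D' × Fin D') := ∫ z, g0 z ∂ν with hM'
  have hMM' : toE D' (Matrix.of fun i j =>
      ∫ z, G (hQ.sqrt.mulVec z) i j ∂(stdGaussian D)) = M' := by
    ext p
    have h := ContinuousLinearMap.integral_comp_comm
      (EuclideanSpace.proj (𝕜 := ℝ) p) hint0
    exact h
  -- strong law of large numbers for the limit matrix
  set X : ℕ → Ω → EuclideanSpace ℝ (Fin D' × Fin D') := fun c ω => g0 (Z c ω) with hX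
  have hintX : Integrable (X 0) μ := by
    have h := (integrable_map_measure
      (hg0cont.aestronglyMeasurable.mono_ac (by rw [hZlaw 0]))
      (hZmeas 0).aemeasurable).1
    rw [hZlaw 0] at h
    exact h hint0
  have hpair : Pairwise (Function.onFun (IndepFun · · μ) X) := fun i j hij =>
    (hZindep.indepFun hij).comp hg0cont.measurable hg0cont.measurable
  have hident : ∀ i, IdentDistrib (X i) (X 0) μ μ := fun i =>
    ⟨(hg0cont.measurable.comp (hZmeas i)).aemeasurable,
     (hg0cont.measurable.comp (hZmeas 0)).aemeasurable, by
      rw [hX]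
      show Measure.map (g0 ∘ Z i) μ = Measure.map (g0 ∘ Z 0) μ
      rw [← Measure.map_map hg0cont.measurable (hZmeas i),
        ← Measure.map_map hg0cont.measurable (hZmeas 0), hZlaw i, hZlaw 0]⟩
  have hEX : μ[X 0] = M' := by
    have := integral_map (hZmeas 0).aemeasurable
      (f := g0) (hg0cont.aestronglyMeasurable.mono_ac (by rw [hZlaw 0]))
    rw [hZlaw 0] at this
    exact this.symm
  have hslln := strong_law_ae X hintX hpair hident
  rw [hEX] at hslln
  set f : ℕ → Ω → EuclideanSpace ℝ (Fin D' × Fin D') :=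
    fun n ω => (n : ℝ)⁻¹ • ∑ i ∈ Finset.range n, X i ω with hf
  have hfmeas : ∀ n, AEStronglyMeasurable (f n) μ := fun n =>
    ((Finset.measurable_sum _ fun c _ =>
      hg0cont.measurable.comp (hZmeas c)).const_smul ((n:ℝ)⁻¹)).aestronglyMeasurable
  have htim : TendstoInMeasure μ f atTop (fun _ => M') :=
    tendstoInMeasure_of_tendsto_ae hfmeas hslln
  have htermB := tendstoInMeasure_iff_dist.mp htim (δ/2) (by linarith)
  -- term A : Markov bound
  set ε' : ℕ → ℝ≥0∞ := fun n => ∫⁻ z, (‖gE n z - g0 z‖₊ : ℝ≥0∞) ∂ν with hε'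
  have hε'0 : Tendsto ε' atTop (𝓝 0) :=
    lintegral_tendsto G hGcont A B r hA hB hr0 hr2 hG _ _ hSn K hKn hKS
  set An : ℕ → Ω → EuclideanSpace ℝ (Fin D' × Fin D') :=
    fun n ω => (n : ℝ)⁻¹ • ∑ c ∈ Finset.range n, (gE n (Z c ω) - g0 (Z c ω)) with hAn
  have hdiffmeas : ∀ n c, Measurable fun ω => (‖gE n (Z c ω) - g0 (Z c ω)‖₊ : ℝ≥0∞) :=
    fun n c => ((((hgEcont n).sub hg0cont).measurable.comp (hZmeas c)).nnnorm).coe_nnreal_ennreal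
  have hAnint : ∀ n, 1 ≤ n → ∫⁻ ω, (‖An n ω‖₊ : ℝ≥0∞) ∂μ ≤ ε' n := by
    intro n hn
    have hne : ((n:ℝ≥0∞)) ≠ 0 := by
      simp only [ne_eq, Nat.cast_eq_zero]; omega
    have hne' : ((n:ℝ≥0)) ≠ 0 := Nat.cast_ne_zero.mpr (by omega)
    calc ∫⁻ ω, (‖An n ω‖₊ : ℝ≥0∞) ∂μ
        = ∫⁻ ω, (n : ℝ≥0∞)⁻¹ * (‖∑ c ∈ Finset.range n, (gE n (Z c ω) - g0 (Z c ω))‖₊ : ℝ≥0∞)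
          ∂μ := by
          congr 1; funext ω
          rw [hAn]
          simp only [nnnorm_smul]
          rw [ENNReal.coe_mul]
          rw [nnnorm_inv, Real.nnnorm_natCast, ENNReal.coe_inv hne', ENNReal.coe_natCast]
      _ = (n : ℝ≥0∞)⁻¹ * ∫⁻ ω, (‖∑ c ∈ Finset.range n, (gE n (Z c ω) - g0 (Z c ω))‖₊ : ℝ≥0∞)
          ∂μ := by
          rw [lintegral_const_mul]
          exact ((Finset.measurable_sum _ fun c _ =>
            (((hgEcont n).sub hg0cont).measurable.comp (hZmeas c))).nnnorm).coe_nnreal_ennreal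
      _ ≤ (n : ℝ≥0∞)⁻¹ * ∫⁻ ω, ∑ c ∈ Finset.range n,
            (‖gE n (Z c ω) - g0 (Z c ω)‖₊ : ℝ≥0∞) ∂μ := by
          gcongr with ω
          calc ((‖∑ c ∈ Finset.range n, (gE n (Z c ω) - g0 (Z c ω))‖₊ : ℝ≥0) : ℝ≥0∞)
              ≤ ((∑ c ∈ Finset.range n, ‖gE n (Z c ω) - g0 (Z c ω)‖₊ : ℝ≥0) : ℝ≥0∞) := by
                exact_mod_cast nnnorm_sum_le _ _
            _ = ∑ c ∈ Finset.range n, (‖gE n (Z c ω) - g0 (Z c ω)‖₊ : ℝ≥0∞) := by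
                push_cast; rfl
      _ = (n : ℝ≥0∞)⁻¹ * ∑ c ∈ Finset.range n,
            ∫⁻ ω, (‖gE n (Z c ω) - g0 (Z c ω)‖₊ : ℝ≥0∞) ∂μ := by
          rw [lintegral_finset_sum _ fun c _ => hdiffmeas n c]
      _ = (n : ℝ≥0∞)⁻¹ * ∑ c ∈ Finset.range n, ε' n := by
          congr 1
          refine Finset.sum_congr rfl fun c _ => ?_
          have hmz : Measurable fun z : Fin D → ℝ => (‖gE n z - g0 z‖₊ : ℝ≥0∞) :=
            (((((hgEcont n).sub hg0cont)).nnnorm).measurable).coe_nnreal_ennreal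
          have h := lintegral_map (μ := μ) hmz (hZmeas c)
          rw [hZlaw c] at h
          exact h.symm
      _ = ε' n := by
          rw [Finset.sum_const, Finset.card_range, nsmul_eq_mul, ← mul_assoc,
            ENNReal.inv_mul_cancel hne (by simp), one_mul]
  have hc0 : ENNReal.ofReal (δ/2) ≠ 0 := by
    simp only [ne_eq, ENNReal.ofReal_eq_zero, not_le]; linarith
  have htermA : ∀ n, 1 ≤ n →
      μ {ω | δ/2 < ‖An n ω‖} ≤ ε' n / ENNReal.ofReal (δ/2) := by
    intro n hn
    have hsub : {ω | δ/2 < ‖An n ω‖} ⊆ {ω | ENNReal.ofReal (δ/2) ≤ (‖An n ω‖₊ : ℝ≥0∞)} := by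
      intro ω hω
      simp only [Set.mem_setOf_eq] at hω ⊢
      rw [← enorm_eq_nnnorm, ← ofReal_norm]
      exact ENNReal.ofReal_le_ofReal hω.le
    have hAm : AEMeasurable (fun ω => (‖An n ω‖₊ : ℝ≥0∞)) μ := by
      refine Measurable.aemeasurable ?_
      exact (((Finset.measurable_sum _ fun c _ =>
        (((hgEcont n).sub hg0cont).measurable.comp (hZmeas c))).const_smul
          ((n:ℝ)⁻¹)).nnnorm).coe_nnreal_ennreal
    calc μ {ω | δ/2 < ‖An n ω‖} ≤ μ {ω | ENNReal.ofReal (δ/2) ≤ (‖An n ω‖₊ : ℝ≥0∞)} :=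
          measure_mono hsub
      _ ≤ (∫⁻ ω, (‖An n ω‖₊ : ℝ≥0∞) ∂μ) / ENNReal.ofReal (δ/2) :=
          meas_ge_le_lintegral_div hAm hc0 ENNReal.ofReal_ne_top
      _ ≤ ε' n / ENNReal.ofReal (δ/2) :=
          ENNReal.div_le_div_right (hAnint n hn) _
  -- assembling
  have hsum : Tendsto (fun n => ε' n / ENNReal.ofReal (δ/2)
      + μ {x | δ/2 ≤ dist (f n x) M'}) atTop (𝓝 0) := by
    have h1 : Tendsto (fun n => ε' n / ENNReal.ofReal (δ/2)) atTop (𝓝 0) := by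
      have := ENNReal.Tendsto.mul_const (b := (ENNReal.ofReal (δ/2))⁻¹) hε'0
        (Or.inr (by simpa using hc0))
      simpa [div_eq_mul_inv] using this
    have := h1.add htermB
    simpa using this
  apply tendsto_of_tendsto_of_tendsto_of_le_of_le' tendsto_const_nhds hsum
  · exact Eventually.of_forall fun n => zero_le
  · filter_upwards [eventually_ge_atTop 1] with n hn
    have hsubset : {ω | δ < frobNorm ((n : ℝ)⁻¹ •
          ∑ c ∈ Finset.range n, G ((hQn n).sqrt.mulVec (Z c ω)) -
        Matrix.of fun i j => ∫ z, G (hQ.sqrt.mulVec z) i j ∂(stdGaussian D))}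
        ⊆ {ω | δ/2 < ‖An n ω‖} ∪ {ω | δ/2 ≤ dist (f n ω) M'} := by
      intro ω hω
      simp only [Set.mem_setOf_eq] at hω
      have e1 : toE D' ((n : ℝ)⁻¹ •
            ∑ c ∈ Finset.range n, G ((hQn n).sqrt.mulVec (Z c ω))) = An n ω + f n ω := by
        rw [LinearMap.map_smul (toE D'), map_sum, hAn, hf, hX]
        simp only [smul_sub, Finset.sum_sub_distrib]
        abel
      have hkey : frobNorm ((n : ℝ)⁻¹ •
            ∑ c ∈ Finset.range n, G ((hQn n).sqrt.mulVec (Z c ω)) -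
          Matrix.of fun i j => ∫ z, G (hQ.sqrt.mulVec z) i j ∂(stdGaussian D))
          = ‖An n ω + (f n ω - M')‖ := by
        rw [frobNorm_eq, map_sub, e1, hMM']
        congr 1
        abel
      rw [hkey] at hω
      by_contra hcon
      simp only [Set.mem_union, Set.mem_setOf_eq, not_or, not_lt, not_le] at hcon
      obtain ⟨h1, h2⟩ := hcon
      have : ‖An n ω + (f n ω - M')‖ ≤ δ/2 + δ/2 := by
        refine (norm_add_le _ _).trans ?_
        have h2' : ‖f n ω - M'‖ < δ/2 := by rwa [← dist_eq_norm]
        linarith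
      linarith
    calc μ _ ≤ μ ({ω | δ/2 < ‖An n ω‖} ∪ {ω | δ/2 ≤ dist (f n ω) M'}) :=
          measure_mono hsubset
      _ ≤ μ {ω | δ/2 < ‖An n ω‖} + μ {ω | δ/2 ≤ dist (f n ω) M'} := measure_union_le _ _
      _ ≤ ε' n / ENNReal.ofReal (δ/2) + μ {x | δ/2 ≤ dist (f n x) M'} := by
          gcongr
          exact htermA n hn
end

section
/- Let (X_n, Y_n) be random variables in Polish spaces 𝕏, 𝕐, with ν_n(dy|x) a version of the conditional law of Y_n given X_n = x. Assume (1) X_n → x₀ in probability for a constant x₀; (2) there exists y₀ ∈ 𝕐 such that for every sequence x_n → x₀ in 𝕏, the measures ν_n(·|x_n) converge weakly to the Dirac mass δ_{y₀}. Then Y_n → y₀ in probability. -/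
open MeasureTheory ProbabilityTheory Filter

/-- Bridge lemma: if `X_n → x₀` in probability, and the conditional laws
`ν_n(·|x_n)` converge weakly to `δ_{y₀}` along every sequence `x_n → x₀`, then
`Y_n → y₀` in probability. -/
theorem bridge_convergence_in_probability
    {𝕏 𝕐 : Type*} [MetricSpace 𝕏] [PolishSpace 𝕏] [MeasurableSpace 𝕏]
    [BorelSpace 𝕏] [MetricSpace 𝕐] [PolishSpace 𝕐] [MeasurableSpace 𝕐]
    [BorelSpace 𝕐]
    {Ω : Type*} [MeasurableSpace Ω] (μ : Measure Ω) [IsProbabilityMeasure μ]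
    (X : ℕ → Ω → 𝕏) (Y : ℕ → Ω → 𝕐)
    (hX : ∀ n, Measurable (X n)) (hY : ∀ n, Measurable (Y n))
    (κ : ℕ → ProbabilityTheory.Kernel 𝕏 𝕐) (hκ : ∀ n, IsMarkovKernel (κ n))
    -- `κ n` is a version of the conditional law of `Y n` given `X n`:
    (hcond : ∀ n,
      Measure.map (fun ω => (X n ω, Y n ω)) μ =
        (Measure.map (X n) μ).compProd (κ n))
    (x₀ : 𝕏) (y₀ : 𝕐)
    -- (1) `X n → x₀` in probability:
    (hXconv : ∀ δ > 0,
      Tendsto (fun n => μ {ω | δ < dist (X n ω) x₀}) atTop (nhds 0))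
    -- (2) weak convergence of `ν_n(·|x_n)` to `δ_{y₀}` along every `x_n → x₀`:
    (hweak : ∀ x : ℕ → 𝕏, Tendsto x atTop (nhds x₀) →
      ∀ f : BoundedContinuousFunction 𝕐 ℝ,
        Tendsto (fun n => ∫ y, f y ∂(κ n (x n))) atTop (nhds (f y₀))) :
    ∀ δ > 0, Tendsto (fun n => μ {ω | δ < dist (Y n ω) y₀}) atTop (nhds 0) := by
  classical
  intro δ hδ
  -- the test function
  set φf : 𝕐 → ℝ := fun y => min 1 ((2/δ) * max (dist y y₀ - δ/2) 0) with hφf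
  have φcont : Continuous φf := by
    apply Continuous.min continuous_const
    exact continuous_const.mul (((continuous_id.dist continuous_const).sub
      continuous_const).max continuous_const)
  have φ0 : ∀ y, 0 ≤ φf y := by
    intro y
    simp only [hφf, le_min_iff]
    constructor
    · positivity
    · positivity
  have φ1 : ∀ y, φf y ≤ 1 := fun y => min_le_left _ _
  have φy₀ : φf y₀ = 0 := by
    simp [hφf, le_of_lt (half_pos hδ)]
  have φind : ∀ y, δ < dist y y₀ → φf y = 1 := by
    intro y hy
    have h1 : max (dist y y₀ - δ/2) 0 = dist y y₀ - δ/2 := by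
      rw [max_eq_left]; linarith
    have h2 : (1:ℝ) ≤ (2/δ) * (dist y y₀ - δ/2) := by
      have h3 : (2/δ) * (δ/2) ≤ (2/δ) * (dist y y₀ - δ/2) :=
        mul_le_mul_of_nonneg_left (by linarith) (by positivity)
      have h4 : (2/δ) * (δ/2) = 1 := by field_simp
      linarith
    simp only [hφf, h1]
    exact min_eq_left h2
  let φ : BoundedContinuousFunction 𝕐 ℝ :=
    BoundedContinuousFunction.mkOfBound ⟨φf, φcont⟩ 1 (by
      intro a b
      rw [Real.dist_eq]
      have := φ0 a; have := φ0 b; have := φ1 a; have := φ1 b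
      rw [abs_sub_le_iff]
      constructor <;> simp only [ContinuousMap.coe_mk] <;> linarith)
  have φcoe : ∀ y, φ y = φf y := fun y => rfl
  -- the conditional expectation of the test function
  set g : ℕ → 𝕏 → ℝ := fun n x => ∫ y, φf y ∂(κ n x) with hg
  have gsm : ∀ n, StronglyMeasurable (g n) := by
    intro n
    exact StronglyMeasurable.integral_kernel_prod_right
      (f := fun _ y => φf y) ((φcont.comp continuous_snd).stronglyMeasurable)
  have g0 : ∀ n x, 0 ≤ g n x := fun n x => integral_nonneg φ0
  have gκint : ∀ n x, Integrable φf (κ n x) := by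
    intro n x
    refine (integrable_const (1:ℝ)).mono' φcont.aestronglyMeasurable ?_
    filter_upwards with y
    rw [Real.norm_eq_abs, abs_le]
    exact ⟨by linarith [φ0 y], φ1 y⟩
  have g1 : ∀ n x, g n x ≤ 1 := by
    intro n x
    calc g n x ≤ ∫ _, (1:ℝ) ∂(κ n x) := integral_mono (gκint n x) (integrable_const 1) φ1
    _ = 1 := by simp
  -- key uniform smallness claim
  have key : ∀ ε > 0, ∃ η > 0, ∃ N : ℕ, ∀ n ≥ N, ∀ x, dist x x₀ ≤ η → g n x ≤ ε := by
    by_contra hcon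
    push_neg at hcon
    obtain ⟨ε, εpos, hcon⟩ := hcon
    have step : ∀ k N : ℕ, ∃ n ≥ N, ∃ x, dist x x₀ ≤ 1/(k+1) ∧ ε < g n x := by
      intro k N
      obtain ⟨n, hn, x, hx1, hx2⟩ := hcon (1/(k+1)) (by positivity) N
      exact ⟨n, hn, x, hx1, hx2⟩
    choose nn hnn xx hxx1 hxx2 using step
    -- build a strictly increasing subsequence
    let arg : ℕ → ℕ := fun k => Nat.rec 0 (fun k ih => nn k ih + 1) k
    set u : ℕ → ℕ := fun k => nn k (arg k) with hu
    set t : ℕ → 𝕏 := fun k => xx k (arg k) with ht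
    have humono : StrictMono u := by
      apply strictMono_nat_of_lt_succ
      intro k
      have h1 : arg (k+1) = u k + 1 := rfl
      have h2 : u (k+1) ≥ arg (k+1) := hnn _ _
      omega
    set x : ℕ → 𝕏 := fun m => if h : ∃ k, u k = m then t h.choose else x₀ with hx
    have hxu : ∀ k, x (u k) = t k := by
      intro k
      have h : ∃ k', u k' = u k := ⟨k, rfl⟩
      have : h.choose = k := humono.injective h.choose_spec
      simp only [hx, dif_pos h, this]
    have hxt : Tendsto x atTop (nhds x₀) := by
      rw [Metric.tendsto_atTop]
      intro ε' hε'
      obtain ⟨K, hK⟩ := exists_nat_one_div_lt hε'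
      refine ⟨u K + 1, fun m hm => ?_⟩
      by_cases h : ∃ k, u k = m
      · simp only [hx, dif_pos h]
        have hk : h.choose > K := by
          have := h.choose_spec
          have : u K < u h.choose := by omega
          exact humono.lt_iff_lt.mp this
        calc dist (t h.choose) x₀ ≤ 1/(h.choose+1) := hxx1 _ _
        _ ≤ 1/(K+1) := by
            apply one_div_le_one_div_of_le (by positivity)
            have : (K:ℝ) ≤ h.choose := by exact_mod_cast hk.le
            linarith
        _ < ε' := hK
      · simp only [hx, dif_neg h, dist_self]; exact hε'
    have hgt : Tendsto (fun m => g m (x m)) atTop (nhds 0) := by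
      have := hweak x hxt φ
      rw [φcoe, φy₀] at this
      exact this
    have : Tendsto (fun k => g (u k) (x (u k))) atTop (nhds 0) :=
      hgt.comp humono.tendsto_atTop
    have hev : ∀ᶠ k in atTop, g (u k) (x (u k)) < ε :=
      this.eventually_lt_const εpos
    obtain ⟨k, hk⟩ := hev.exists
    rw [hxu k] at hk
    exact absurd (hxx2 k (arg k)) (not_lt.mpr hk.le)
  -- measurability of the bad sets
  have Ymeas : ∀ n, MeasurableSet {ω | δ < dist (Y n ω) y₀} := fun n =>
    measurableSet_lt measurable_const ((hY n).dist measurable_const)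
  have Xmeas : ∀ η, ∀ n, MeasurableSet {ω | η < dist (X n ω) x₀} := fun η n =>
    measurableSet_lt measurable_const ((hX n).dist measurable_const)
  -- the transfer identity
  have hprob : ∀ n, IsProbabilityMeasure (Measure.map (X n) μ) := fun n =>
    Measure.isProbabilityMeasure_map (hX n).aemeasurable
  have hid : ∀ n, ∫ ω, φf (Y n ω) ∂μ = ∫ ω, g n (X n ω) ∂μ := by
    intro n
    have := hprob n
    have h1 : ∫ ω, φf (Y n ω) ∂μ
        = ∫ p : 𝕏 × 𝕐, φf p.2 ∂(Measure.map (fun ω => (X n ω, Y n ω)) μ) :=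
      (integral_map ((hX n).prodMk (hY n)).aemeasurable
        (φcont.comp continuous_snd).aestronglyMeasurable).symm
    have hint : Integrable (fun p : 𝕏 × 𝕐 => φf p.2)
        ((Measure.map (X n) μ).compProd (κ n)) := by
      refine (integrable_const (1:ℝ)).mono'
        (φcont.comp continuous_snd).aestronglyMeasurable ?_
      filter_upwards with p
      rw [Real.norm_eq_abs, abs_le]
      exact ⟨by linarith [φ0 p.2], φ1 p.2⟩
    rw [h1, hcond n, Measure.integral_compProd hint]
    exact integral_map (hX n).aemeasurable (gsm n).aestronglyMeasurable
  have gXint : ∀ n, Integrable (fun ω => g n (X n ω)) μ := by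
    intro n
    refine (integrable_const (1:ℝ)).mono'
      ((gsm n).measurable.comp (hX n)).aestronglyMeasurable ?_
    filter_upwards with ω
    rw [Real.norm_eq_abs, abs_le]
    exact ⟨by linarith [g0 n (X n ω)], g1 n (X n ω)⟩
  have φYint : ∀ n, Integrable (fun ω => φf (Y n ω)) μ := by
    intro n
    refine (integrable_const (1:ℝ)).mono'
      (φcont.measurable.comp (hY n)).aestronglyMeasurable ?_
    filter_upwards with ω
    rw [Real.norm_eq_abs, abs_le]
    exact ⟨by linarith [φ0 (Y n ω)], φ1 (Y n ω)⟩
  -- first bound : μ(A n) ≤ ∫ g n (X n)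
  have hbound1 : ∀ n, (μ {ω | δ < dist (Y n ω) y₀}).toReal ≤ ∫ ω, g n (X n ω) ∂μ := by
    intro n
    rw [← hid n]
    calc (μ {ω | δ < dist (Y n ω) y₀}).toReal
        = ∫ ω, Set.indicator {ω | δ < dist (Y n ω) y₀} (1 : Ω → ℝ) ω ∂μ :=
          (integral_indicator_one (Ymeas n)).symm
      _ ≤ ∫ ω, φf (Y n ω) ∂μ := by
          refine integral_mono ((integrable_const (1:ℝ)).indicator (Ymeas n)) (φYint n) ?_
          intro ω
          by_cases hω : ω ∈ {ω | δ < dist (Y n ω) y₀}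
          · rw [Set.indicator_of_mem hω]
            exact le_of_eq (φind _ hω).symm
          · rw [Set.indicator_of_notMem hω]
            exact φ0 _
  -- main real-valued convergence
  have main : Tendsto (fun n => (μ {ω | δ < dist (Y n ω) y₀}).toReal) atTop (nhds 0) := by
    rw [Metric.tendsto_atTop]
    intro ε εpos
    obtain ⟨η, ηpos, N, hN⟩ := key (ε/3) (by positivity)
    have hXr : Tendsto (fun n => (μ {ω | η < dist (X n ω) x₀}).toReal) atTop (nhds 0) := by
      have h0 : (0 : ENNReal).toReal = 0 := rfl
      rw [← h0]
      exact (ENNReal.tendsto_toReal_iff (fun n => measure_ne_top μ _) (by simp)).mpr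
        (hXconv η ηpos)
    obtain ⟨N2, hN2⟩ := Metric.tendsto_atTop.mp hXr (ε/3) (by positivity)
    refine ⟨max N N2, fun n hn => ?_⟩
    have hn1 : n ≥ N := le_trans (le_max_left _ _) hn
    have hn2 : n ≥ N2 := le_trans (le_max_right _ _) hn
    have hptwise : ∀ ω, g n (X n ω)
        ≤ ε/3 + Set.indicator {ω | η < dist (X n ω) x₀} (1 : Ω → ℝ) ω := by
      intro ω
      by_cases hω : ω ∈ {ω | η < dist (X n ω) x₀}
      · rw [Set.indicator_of_mem hω, Pi.one_apply]
        linarith [g1 n (X n ω)]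
      · rw [Set.indicator_of_notMem hω]
        simp only [Set.mem_setOf_eq, not_lt] at hω
        have := hN n hn1 (X n ω) hω
        linarith
    have hind : Integrable (Set.indicator {ω | η < dist (X n ω) x₀} (1 : Ω → ℝ)) μ :=
      (integrable_const (1:ℝ)).indicator (Xmeas η n)
    have hint2 : ∫ ω, g n (X n ω) ∂μ
        ≤ ε/3 + (μ {ω | η < dist (X n ω) x₀}).toReal := by
      calc ∫ ω, g n (X n ω) ∂μ
          ≤ ∫ ω, (ε/3 + Set.indicator {ω | η < dist (X n ω) x₀} (1 : Ω → ℝ) ω) ∂μ :=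
            integral_mono (gXint n) ((integrable_const _).add hind) hptwise
        _ = ε/3 + (μ {ω | η < dist (X n ω) x₀}).toReal := by
            rw [integral_add (integrable_const _) hind,
              integral_const, integral_indicator_one (Xmeas η n)]
            simp [measureReal_def]
    have habs : dist ((μ {ω | η < dist (X n ω) x₀}).toReal) 0 < ε/3 := hN2 n hn2
    rw [Real.dist_eq, sub_zero, abs_of_nonneg ENNReal.toReal_nonneg] at habs
    rw [Real.dist_eq, sub_zero, abs_of_nonneg ENNReal.toReal_nonneg]
    calc (μ {ω | δ < dist (Y n ω) y₀}).toReal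
        ≤ ∫ ω, g n (X n ω) ∂μ := hbound1 n
      _ ≤ ε/3 + (μ {ω | η < dist (X n ω) x₀}).toReal := hint2
      _ < ε/3 + ε/3 := by linarith
      _ < ε := by linarith
  -- transfer back to `ℝ≥0∞`
  have := ENNReal.tendsto_ofReal main
  rw [ENNReal.ofReal_zero] at this
  convert this using 2 with n
  rw [ENNReal.ofReal_toReal (measure_ne_top μ _)]
end
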